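/- Consider a decoupled model in ℂ⁴ (n = d = 2): P_1(z,w) = Σ_{j=D_1−k_1}^{k_1} α_j z_1^j w_1^{D_1−j} with α_j = conj(α_{D_1−j}), and P_2(z,w) = Σ_{j=D_2−k_2}^{k_2} β_j z_2^j w_2^{D_2−j} with β_j = conj(β_{D_2−j}), where 2 ≤ D_1 < D_2, D_ℓ/2 ≤ k_ℓ ≤ D_ℓ−1, and k_0 = max{k_1,k_2}. Then for every c ∈ ℝ², every V ∈ ℂ²∖{0}, and every 2×2 matrix Q(ζ) of polynomials in ζ satisfying ζ^{k_0} Σ_{ℓ=1}^2 c_ℓ P_{ℓ,z_i w_j}((1−ζ)V, (1−conj ζ)·conj V) = (1−conj ζ)^{D_1−2} Q_{ij}(ζ) for all |ζ| = 1, the matrix Q(1) is not invertible. In particular, no such decoupled model with D_1 < D_2 is admissible. -/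

import Mathlib

open ComplexConjugate

noncomputable section

/-- The decoupled polynomial `Σ_{j=D−k}^{k} γ_j z_i^j w_i^{D−j}` in the variables
`z = X ∘ Sum.inl`, `w = X ∘ Sum.inr` (case `n = 2`), using only the `i`-th pair. -/
def decP (D k : ℕ) (γ : ℕ → ℂ) (i : Fin 2) : MvPolynomial (Fin 2 ⊕ Fin 2) ℂ :=
  ∑ j ∈ Finset.Icc (D - k) k,
    MvPolynomial.C (γ j) * MvPolynomial.X (Sum.inl i) ^ j *
      MvPolynomial.X (Sum.inr i) ^ (D - j)

namespace Stmt8Aux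

open MvPolynomial Finset

theorem circleInf : Set.Infinite {z : ℂ | ‖z‖ = 1} := by
  have h : Set.InjOn (fun t : ℝ => Complex.exp (t * Complex.I)) (Set.Ioo 0 1) := by
    intro a ha b hb hab
    rw [Complex.exp_eq_exp_iff_exists_int] at hab
    obtain ⟨n, hn⟩ := hab
    have hI : (Complex.I : ℂ) ≠ 0 := Complex.I_ne_zero
    have h2' : (a:ℂ) * Complex.I = ((b:ℂ) + n*(2*Real.pi)) * Complex.I := by
      linear_combination hn
    have h2 := mul_right_cancel₀ hI h2'
    have h3 : a = b + n * (2 * Real.pi) := by exact_mod_cast h2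
    have hn0 : n = 0 := by
      by_contra hne
      have h1 : (1:ℝ) ≤ |(n:ℝ)| := by exact_mod_cast Int.one_le_abs hne
      have hpi : (2:ℝ) ≤ 2 * Real.pi := by nlinarith [Real.pi_gt_three]
      have h4 : 2 ≤ |(n:ℝ) * (2*Real.pi)| := by
        rw [abs_mul]
        calc (2:ℝ) = 1 * 2 := by ring
        _ ≤ |(n:ℝ)| * |2*Real.pi| := by
            apply mul_le_mul h1 ?_ (by norm_num) (abs_nonneg _)
            rw [abs_of_pos (by positivity)]; exact hpi
      have hab : |a - b| < 1 := by
        rw [abs_lt]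
        constructor <;> [linarith [ha.1, ha.2, hb.1, hb.2]; linarith [ha.1, ha.2, hb.1, hb.2]]
      have hq : a - b = (n:ℝ) * (2*Real.pi) := by linarith [h3]
      rw [hq] at hab; linarith [hab, h4, abs_nonneg ((n:ℝ)*(2*Real.pi))]
    rw [hn0] at h3; push_cast at h3; linarith
  have h2 : Set.Infinite ((fun t : ℝ => Complex.exp (t * Complex.I)) '' (Set.Ioo 0 1)) :=
    Set.Infinite.image h (Set.Ioo_infinite (by norm_num))
  apply h2.mono
  rintro z ⟨t, _, rfl⟩
  simp [Complex.norm_exp_ofReal_mul_I]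

theorem dd_zero₁ (D k : ℕ) (γ : ℕ → ℂ) (i m : Fin 2) (h : m ≠ i) :
    pderiv (Sum.inr m) (decP D k γ i) = 0 := by
  unfold decP
  rw [map_sum]
  apply Finset.sum_eq_zero
  intro j _
  simp [pderiv_mul, pderiv_pow,
    pderiv_X_of_ne (show (Sum.inl i : Fin 2 ⊕ Fin 2) ≠ Sum.inr m by simp),
    pderiv_X_of_ne (show (Sum.inr i : Fin 2 ⊕ Fin 2) ≠ Sum.inr m by simp [Ne.symm h])]

theorem dd_zero₂ (D k : ℕ) (γ : ℕ → ℂ) (i m v : Fin 2) (h : m ≠ i) :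
    pderiv (Sum.inl m) (pderiv (Sum.inr v) (decP D k γ i)) = 0 := by
  by_cases hv : v = i
  · rw [hv]
    unfold decP
    rw [map_sum, map_sum]
    apply Finset.sum_eq_zero
    intro j _
    simp [pderiv_mul, pderiv_pow, pderiv_X_self,
      pderiv_X_of_ne (show (Sum.inl i : Fin 2 ⊕ Fin 2) ≠ Sum.inr i by simp),
      pderiv_X_of_ne (show (Sum.inr i : Fin 2 ⊕ Fin 2) ≠ Sum.inl i by simp),
      pderiv_X_of_ne (show (Sum.inl i : Fin 2 ⊕ Fin 2) ≠ Sum.inl m by simp [Ne.symm h]),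
      pderiv_X_of_ne (show (Sum.inr i : Fin 2 ⊕ Fin 2) ≠ Sum.inl m by simp)]
  · rw [dd_zero₁ D k γ i v hv, map_zero]

theorem eval_dd (D k : ℕ) (γ : ℕ → ℂ) (i : Fin 2) (x : Fin 2 ⊕ Fin 2 → ℂ) :
    eval x (pderiv (Sum.inl i) (pderiv (Sum.inr i) (decP D k γ i)))
    = ∑ j ∈ Finset.Icc (D-k) k,
        γ j * j * (D-j : ℕ) * x (Sum.inl i)^(j-1) * x (Sum.inr i)^(D-j-1) := by
  unfold decP
  rw [map_sum, map_sum, map_sum]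
  apply Finset.sum_congr rfl
  intro j _
  simp [pderiv_mul, pderiv_pow, pderiv_X_self,
    pderiv_X_of_ne (show (Sum.inl i : Fin 2 ⊕ Fin 2) ≠ Sum.inr i by simp),
    pderiv_X_of_ne (show (Sum.inr i : Fin 2 ⊕ Fin 2) ≠ Sum.inl i by simp)]
  ring

end Stmt8Aux

theorem stmt8 (D1 D2 k1 k2 : ℕ) (hD1 : 2 ≤ D1) (hD12 : D1 < D2)
    (hk1 : D1 ≤ 2 * k1) (hk1' : k1 ≤ D1 - 1)
    (hk2 : D2 ≤ 2 * k2) (hk2' : k2 ≤ D2 - 1)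
    (α β : ℕ → ℂ)
    (hα : ∀ j, D1 - k1 ≤ j → j ≤ k1 → α j = conj (α (D1 - j)))
    (hβ : ∀ j, D2 - k2 ≤ j → j ≤ k2 → β j = conj (β (D2 - j))) :
    ∀ (c : Fin 2 → ℝ) (V : Fin 2 → ℂ), V ≠ 0 →
      ∀ Q : Fin 2 → Fin 2 → Polynomial ℂ,
        (∀ ζ : ℂ, ‖ζ‖ = 1 → ∀ i j : Fin 2,
          ζ ^ (max k1 k2) * ∑ ℓ : Fin 2, (c ℓ : ℂ) *
              MvPolynomial.eval
                (Sum.elim (fun p => (1 - ζ) * V p)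
                  (fun p => (1 - conj ζ) * conj (V p)))
                (MvPolynomial.pderiv (Sum.inl i)
                  (MvPolynomial.pderiv (Sum.inr j)
                    (![decP D1 k1 α 0, decP D2 k2 β 1] ℓ)))
            = (1 - conj ζ) ^ (D1 - 2) * (Q i j).eval ζ) →
        ¬ IsUnit (Matrix.of fun i j : Fin 2 => (Q i j).eval 1) := by
  intro c V hV Q hQ
  have hD2 : 3 ≤ D2 := by omega
  -- Step 1 : the (0,1) entry is the zero polynomial.
  have h01 : (Q 0 1).eval 1 = 0 := by
    have hZero : Q 0 1 = 0 := by
      apply Polynomial.eq_zero_of_infinite_isRoot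
      apply Set.Infinite.mono ?_ ((Stmt8Aux.circleInf.diff (Set.finite_singleton 1)))
      rintro z ⟨hz1, hz2⟩
      simp only [Set.mem_setOf_eq] at hz1
      have h1 := hQ z hz1 0 1
      rw [Fin.sum_univ_two] at h1
      simp only [Matrix.cons_val_zero, Matrix.cons_val_one, Matrix.head_cons] at h1
      rw [Stmt8Aux.dd_zero₁ D1 k1 α 0 1 (by decide), map_zero,
        Stmt8Aux.dd_zero₂ D2 k2 β 1 0 1 (by decide)] at h1
      simp only [map_zero, mul_zero, add_zero, zero_add, MvPolynomial.eval_zero] at h1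
      have hcz : conj z ≠ 1 := by
        intro h
        apply hz2
        have := congrArg (conj) h
        simpa using this
      have hfac : ((1:ℂ) - conj z) ^ (D1-2) ≠ 0 :=
        pow_ne_zero _ (sub_ne_zero.mpr (fun h => hcz h.symm))
      have := h1.symm
      rcases mul_eq_zero.mp this with h | h
      · exact absurd h hfac
      · exact h
    rw [hZero]; simp
  -- Step 2 : the (1,1) entry vanishes at 1.
  set k0 := max k1 k2 with hk0
  set SS : Polynomial ℂ :=
    Polynomial.C ((c 1 : ℂ)) * Polynomial.X ^ k0 *
      ∑ j ∈ Finset.Icc (D2-k2) k2,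
        Polynomial.C (β j * j * ((D2-j : ℕ) : ℂ) * (V 1)^(j-1) * (conj (V 1))^(D2-j-1)
          * (-1)^(j-1)) * Polynomial.X ^ j with hSS
  have haux : ∀ ζ : ℂ, ‖ζ‖ = 1 →
      ((Polynomial.X - 1)^(D2-2) * SS).eval ζ
        = ((Polynomial.X - 1)^(D1-2) * (Polynomial.X ^ (D2-D1+1) * Q 1 1)).eval ζ := by
    intro ζ hζ
    have h2 := hQ ζ hζ 1 1
    rw [Fin.sum_univ_two] at h2
    simp only [Matrix.cons_val_zero, Matrix.cons_val_one, Matrix.head_cons] at h2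
    rw [Stmt8Aux.dd_zero₂ D1 k1 α 0 1 1 (by decide), Stmt8Aux.eval_dd D2 k2 β 1] at h2
    simp only [map_zero, mul_zero, add_zero, zero_add, MvPolynomial.eval_zero,
      Sum.elim_inl, Sum.elim_inr] at h2
    -- basic facts about ζ
    have hzmc : ζ * conj ζ = 1 := by
      have : Complex.normSq ζ = 1 := by
        rw [Complex.normSq_eq_norm_sq, hζ]; norm_num
      rw [Complex.mul_conj, this]; norm_num
    have hz : ζ * (1 - conj ζ) = ζ - 1 := by
      rw [mul_sub, mul_one, hzmc]
    -- the term-by-term identity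
    have hterm' : ζ^(D2-1) * (∑ j ∈ Finset.Icc (D2-k2) k2,
          β j * j * ((D2-j:ℕ):ℂ) * ((1-ζ) * V 1)^(j-1)
            * ((1 - conj ζ) * conj (V 1))^(D2-j-1))
        = (ζ-1)^(D2-2) * ∑ j ∈ Finset.Icc (D2-k2) k2,
            (β j * j * ((D2-j:ℕ):ℂ) * (V 1)^(j-1) * (conj (V 1))^(D2-j-1) * (-1)^(j-1))
              * ζ^j := by
      rw [Finset.mul_sum, Finset.mul_sum]
      apply Finset.sum_congr rfl
      intro j hj
      rw [Finset.mem_Icc] at hj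
      obtain ⟨hja, hjb⟩ := hj
      obtain ⟨p, rfl⟩ : ∃ p, j = p+1 := ⟨j-1, by omega⟩
      obtain ⟨m, hm⟩ : ∃ m, D2 = m+p+2 := ⟨D2-p-2, by omega⟩
      rw [hm]
      simp only [show m+p+2-1 = m+p+1 from by omega, show m+p+2-(p+1) = m+1 from by omega,
        show (p+1)-1 = p from by omega, show m+1-1 = m from by omega,
        show m+p+2-2 = m+p from by omega]
      have e3 : (1-ζ)^p = (-1:ℂ)^p * (ζ-1)^p := by
        rw [← mul_pow]; ring_nf
      have e6 : (ζ-1)^m = ζ^m * (1 - conj ζ)^m := by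
        rw [← mul_pow, hz]
      rw [mul_pow, mul_pow (1 - conj ζ) (conj (V 1)), e3, pow_add (ζ-1) m p, e6]
      ring
    -- assemble
    simp only [hSS, Polynomial.eval_mul, Polynomial.eval_pow, Polynomial.eval_sub,
      Polynomial.eval_X, Polynomial.eval_one, Polynomial.eval_C, Polynomial.eval_finset_sum]
    have eB : (ζ-1)^(D1-2) * ζ^(D2-D1+1) = ζ^(D2-1) * (1 - conj ζ)^(D1-2) := by
      have e1 : (ζ-1)^(D1-2) = ζ^(D1-2) * (1 - conj ζ)^(D1-2) := by
        rw [← mul_pow, hz]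
      rw [e1, mul_assoc, mul_comm ((1 - conj ζ)^(D1-2)) _, ← mul_assoc, ← pow_add,
        show D1-2 + (D2-D1+1) = D2-1 from by omega]
    linear_combination (-(c 1:ℂ)) * ζ^k0 * hterm' + ζ^(D2-1) * h2
      - (Q 1 1).eval ζ * eB
  have AB : (Polynomial.X - 1 : Polynomial ℂ)^(D2-2) * SS
      = (Polynomial.X - 1)^(D1-2) * (Polynomial.X ^ (D2-D1+1) * Q 1 1) := by
    apply Polynomial.eq_of_infinite_eval_eq
    apply Stmt8Aux.circleInf.mono
    intro z hz
    exact haux z hz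
  have hne : ((Polynomial.X - 1 : Polynomial ℂ))^(D1-2) ≠ 0 := by
    apply pow_ne_zero
    simpa using Polynomial.X_sub_C_ne_zero (1:ℂ)
  have hcanc : (Polynomial.X - 1 : Polynomial ℂ)^(D2-D1) * SS
      = Polynomial.X ^ (D2-D1+1) * Q 1 1 := by
    apply mul_left_cancel₀ hne
    rw [← mul_assoc, ← pow_add, show D1-2 + (D2-D1) = D2-2 from by omega]
    exact AB
  have h11 : (Q 1 1).eval 1 = 0 := by
    have := congrArg (Polynomial.eval 1) hcanc
    simp only [Polynomial.eval_mul, Polynomial.eval_pow, Polynomial.eval_sub,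
      Polynomial.eval_X, Polynomial.eval_one, sub_self] at this
    rw [zero_pow (show D2-D1 ≠ 0 from by omega), zero_mul, one_pow, one_mul] at this
    exact this.symm
  -- Step 3 : conclude
  intro hU
  rw [Matrix.isUnit_iff_isUnit_det] at hU
  rw [Matrix.det_fin_two] at hU
  simp only [Matrix.of_apply] at hU
  rw [h01, h11] at hU
  simp at hU
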